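/- Pullback stability of isofibrations and trivial fibrations of groupoids: if G : B ⟶ C is an isofibration (respectively, a surjective-on-objects equivalence) of small groupoids and H : D ⟶ C is any functor, then in the strict pullback square of groupoids the projection P : B ×_C D ⟶ D is an isofibration (respectively, a surjective-on-objects equivalence). -/

import Mathlib

open CategoryTheory

/-- A functor is an isofibration: every arrow into the image of an object lifts. -/
def IsIsofib {B C : Type*} [Category B] [Category C] (F : B ⥤ C) : Prop :=
  ∀ (b : B) (c : C) (γ : c ⟶ F.obj b),
    ∃ (b' : B) (β : b' ⟶ b) (h : F.obj b' = c), F.map β = eqToHom h ≫ γ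

variable {B C D : Type*} [Groupoid B] [Groupoid C] [Groupoid D]

/-- The strict pullback `B ×_C D` of `G : B ⥤ C` along `H : D ⥤ C`: objects are pairs
`(b, d)` with `G b = H d`. -/
structure StrictPB (G : B ⥤ C) (H : D ⥤ C) where
  b : B
  d : D
  h : G.obj b = H.obj d

instance (G : B ⥤ C) (H : D ⥤ C) : Category (StrictPB G H) where
  Hom p q := { m : (p.b ⟶ q.b) × (p.d ⟶ q.d) //
    G.map m.1 = eqToHom p.h ≫ H.map m.2 ≫ eqToHom q.h.symm }
  id p := ⟨(𝟙 _, 𝟙 _), by simp⟩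
  comp m n := ⟨(m.1.1 ≫ n.1.1, m.1.2 ≫ n.1.2), by
    rw [Functor.map_comp, m.2, n.2]; simp⟩
  id_comp m := Subtype.ext (Prod.ext (Category.id_comp _) (Category.id_comp _))
  comp_id m := Subtype.ext (Prod.ext (Category.comp_id _) (Category.comp_id _))
  assoc m n o := Subtype.ext (Prod.ext (Category.assoc _ _ _) (Category.assoc _ _ _))

/-- The projection `B ×_C D ⥤ D`. -/
def StrictPB.proj (G : B ⥤ C) (H : D ⥤ C) : StrictPB G H ⥤ D where
  obj p := p.d
  map m := m.1.2
  map_id _ := rfl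
  map_comp _ _ := rfl

theorem stmt_16 (G : B ⥤ C) (H : D ⥤ C) :
    (IsIsofib G → IsIsofib (StrictPB.proj G H)) ∧
    ((IsIsofib G ∧ G.Full ∧ G.Faithful ∧ Function.Surjective G.obj) →
      (IsIsofib (StrictPB.proj G H) ∧ (StrictPB.proj G H).Full ∧
        (StrictPB.proj G H).Faithful ∧ Function.Surjective (StrictPB.proj G H).obj)) := by
  have isofib : IsIsofib G → IsIsofib (StrictPB.proj G H) := by
    intro hG p d δ
    obtain ⟨b', β, h, hβ⟩ := hG p.b (H.obj d) (H.map δ ≫ eqToHom p.h.symm)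
    exact ⟨⟨b', d, h⟩, ⟨(β, δ), hβ⟩, rfl, by simp [StrictPB.proj]; exact (Category.id_comp δ).symm⟩
  refine ⟨isofib, ?_⟩
  rintro ⟨hiso, hfull, hfaith, hsurj⟩
  refine ⟨isofib hiso, ?_, ?_, ?_⟩
  · constructor
    intro p q δ
    obtain ⟨β, hβ⟩ := hfull.map_surjective (eqToHom p.h ≫ H.map δ ≫ eqToHom q.h.symm)
    exact ⟨⟨(β, δ), hβ⟩, rfl⟩
  · constructor
    intro p q m n hmn
    have h2 : m.1.2 = n.1.2 := hmn
    have h1 : m.1.1 = n.1.1 := by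
      apply hfaith.map_injective
      rw [m.2, n.2, h2]
    exact Subtype.ext (Prod.ext h1 h2)
  · intro d
    obtain ⟨b, hb⟩ := hsurj (H.obj d)
    exact ⟨⟨b, d, hb⟩, rfl⟩
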